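/- Let k = 2ℓ+1 be odd and F the k-dimensional Lyness map. Then V_3 := W + W∘F, i.e. V_3(x) = [Π_{j=0}^{ℓ} x_{2j+1}(x_{2j+1}+1) + (a + Σ_{j=1}^{k} x_j)·Π_{j=1}^{ℓ} x_{2j}(x_{2j}+1)] / Π_{i=1}^{k} x_i, is a first integral of F on the positive orthant: V_3(F(x)) = V_3(x). -/

import Mathlib

/-- for odd `k = 2ℓ+1`, `V₃ = W + W∘F` is a first integral of `F`. -/
theorem lyness_V3_first_integral (l : ℕ) (hl : 1 ≤ l) (a : ℝ) (ha : 0 ≤ a)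
    (F : (Fin (2 * l + 1) → ℝ) → (Fin (2 * l + 1) → ℝ))
    (hF : ∀ x : Fin (2 * l + 1) → ℝ, ∀ i : Fin (2 * l + 1),
      F x i = if h : (i : ℕ) + 1 < 2 * l + 1 then x ⟨(i : ℕ) + 1, h⟩
              else (a + (∑ j, x j) - x ⟨0, by omega⟩) / x ⟨0, by omega⟩)
    (V3 : (Fin (2 * l + 1) → ℝ) → ℝ)
    (hV3 : ∀ x : Fin (2 * l + 1) → ℝ, V3 x =
      ((∏ j : Fin (l + 1),
          (x ⟨2 * (j : ℕ), by have := j.isLt; omega⟩ *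
            (x ⟨2 * (j : ℕ), by have := j.isLt; omega⟩ + 1)))
        + (a + ∑ j, x j) *
          ∏ j : Fin l,
            (x ⟨2 * (j : ℕ) + 1, by have := j.isLt; omega⟩ *
              (x ⟨2 * (j : ℕ) + 1, by have := j.isLt; omega⟩ + 1))) / ∏ i, x i)
    (x : Fin (2 * l + 1) → ℝ) (hx : ∀ i, 0 < x i) :
    V3 (F x) = V3 x := by
  classical
  have hk : (0:ℕ) < 2 * l + 1 := by omega
  set X : ℕ → ℝ := fun i => if h : i < 2 * l + 1 then x ⟨i, h⟩ else 1 with hXdef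
  set Y : ℕ → ℝ := fun i => if h : i < 2 * l + 1 then F x ⟨i, h⟩ else 1 with hYdef
  have hxX : ∀ i : Fin (2 * l + 1), x i = X (i : ℕ) := by
    intro i; simp [hXdef, i.isLt]; intro h; omega
  have hFY : ∀ i : Fin (2 * l + 1), F x i = Y (i : ℕ) := by
    intro i; simp [hYdef, i.isLt]; intro h; omega
  have hXpos : ∀ i : ℕ, i < 2 * l + 1 → 0 < X i := by
    intro i h; simp only [hXdef, dif_pos h]; exact hx _
  have hYX : ∀ i : ℕ, i < 2 * l → Y i = X (i + 1) := by
    intro i h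
    have h1 : i < 2 * l + 1 := by omega
    have h2 : i + 1 < 2 * l + 1 := by omega
    simp only [hYdef, hXdef, dif_pos h1, dif_pos h2]
    rw [hF]
    simp only [dif_pos (show ((⟨i, h1⟩ : Fin (2 * l + 1)) : ℕ) + 1 < 2 * l + 1 from h2)]
  -- sums and products of x in terms of X
  set R := ∑ j : Fin (2 * l), X ((j : ℕ) + 1) with hRdef
  set Q := ∏ j : Fin (2 * l), X ((j : ℕ) + 1) with hQdef
  have hRpos : 0 < R := by
    apply Finset.sum_pos (fun j _ => hXpos _ (by have := j.isLt; omega))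
    exact ⟨⟨0, by omega⟩, Finset.mem_univ _⟩
  have hQpos : 0 < Q := Finset.prod_pos (fun j _ => hXpos _ (by have := j.isLt; omega))
  have hX0 : 0 < X 0 := hXpos 0 hk
  have hs : (∑ j : Fin (2 * l + 1), X (j : ℕ)) = X 0 + R := by
    rw [hRdef, Fin.sum_univ_succ]
    simp [Fin.val_succ]
  have hP : (∏ i : Fin (2 * l + 1), X (i : ℕ)) = X 0 * Q := by
    rw [hQdef, Fin.prod_univ_succ]
    simp [Fin.val_succ]
  have hsx : (∑ j, x j) = X 0 + R := by
    rw [← hs]; exact Finset.sum_congr rfl fun j _ => hxX j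
  -- the last entry of F x
  have hz : Y (2 * l) = (a + R) / X 0 := by
    have h1 : 2 * l < 2 * l + 1 := by omega
    simp only [hYdef, dif_pos h1]
    rw [hF]
    rw [dif_neg (show ¬(((⟨2 * l, h1⟩ : Fin (2 * l + 1)) : ℕ) + 1 < 2 * l + 1) by simp)]
    rw [hxX ⟨0, hk⟩, hsx]
    ring_nf
  -- sum and product of Y
  have hsumY : (∑ j : Fin (2 * l + 1), Y (j : ℕ)) = R + Y (2 * l) := by
    rw [Fin.sum_univ_castSucc]
    congr 1
    · rw [hRdef]
      exact Finset.sum_congr rfl fun j _ => by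
        rw [show ((Fin.castSucc j : Fin (2 * l + 1)) : ℕ) = (j : ℕ) from rfl,
          hYX _ (by have := j.isLt; omega)]
  have hprodY : (∏ j : Fin (2 * l + 1), Y (j : ℕ)) = Q * Y (2 * l) := by
    rw [Fin.prod_univ_castSucc]
    congr 1
    · rw [hQdef]
      exact Finset.prod_congr rfl fun j _ => by
        rw [show ((Fin.castSucc j : Fin (2 * l + 1)) : ℕ) = (j : ℕ) from rfl,
          hYX _ (by have := j.isLt; omega)]
  -- the two key product identities
  set B := ∏ j : Fin l, (X (2 * (j : ℕ) + 1) * (X (2 * (j : ℕ) + 1) + 1)) with hBdef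
  set A' := ∏ j : Fin l, (X (2 * (j : ℕ) + 2) * (X (2 * (j : ℕ) + 2) + 1)) with hA'def
  have h1 : (∏ j : Fin (l + 1), (Y (2 * (j : ℕ)) * (Y (2 * (j : ℕ)) + 1)))
      = B * (Y (2 * l) * (Y (2 * l) + 1)) := by
    rw [Fin.prod_univ_castSucc, hBdef]
    congr 1
    · exact Finset.prod_congr rfl fun j _ => by
        rw [show ((Fin.castSucc j : Fin (l + 1)) : ℕ) = (j : ℕ) from rfl,
          hYX _ (by have := j.isLt; omega)]
  have h2 : (∏ j : Fin l, (Y (2 * (j : ℕ) + 1) * (Y (2 * (j : ℕ) + 1) + 1))) = A' := by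
    rw [hA'def]
    exact Finset.prod_congr rfl fun j _ => by
      rw [hYX _ (by have := j.isLt; omega)]
  have h3 : (∏ j : Fin (l + 1), (X (2 * (j : ℕ)) * (X (2 * (j : ℕ)) + 1)))
      = X 0 * (X 0 + 1) * A' := by
    rw [Fin.prod_univ_succ, hA'def]
    congr 1
  -- assemble
  rw [hV3 (F x), hV3 x]
  simp only [hFY, hxX, Fin.val_mk]
  rw [hsumY, hprodY, hs, hP, h1, h2, h3, hz]
  have hX0' : X 0 ≠ 0 := ne_of_gt hX0
  have hQ' : Q ≠ 0 := ne_of_gt hQpos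
  have haR : a + R ≠ 0 := by positivity
  field_simp
  ring
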